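/- arXiv:2207.00916 — 4 statements merged into one kernel-verified Lean document; each statement's English description precedes it below -/
import Mathlib

section
/- Let {A_i}_{i≥1} be an i.i.d. sequence of random variables with values in (0, 1], let a = inf(supp μ) and b = sup(supp μ) where μ is the distribution of A_1, and suppose b < e^{−e} and a ≥ G(b). Then the power towers T_n = A_1^{A_2^{⋰^{A_n}}} almost surely diverge by oscillation: almost surely the even-indexed subsequence T_{2n} and the odd-indexed subsequence T_{2n+1} each converge, but to distinct limits. -/
open MeasureTheory ProbabilityTheory Filter Set

/-- The power tower `T n = a 1 ^ (a 2 ^ (⋯ ^ (a n)))` (real exponentiation),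
with `T 0 = 1`. -/
noncomputable def tower (a : ℕ → ℝ) : ℕ → ℝ
  | 0 => 1
  | n + 1 => a 1 ^ tower (fun k => a (k + 1)) n

/-- The topological support of a measure on `ℝ`: points all of whose open
neighborhoods have positive measure. -/
def mSupport (μ : Measure ℝ) : Set ℝ :=
  {x | ∀ U : Set ℝ, IsOpen U → x ∈ U → 0 < μ U}

/-- `G b ≤ a` for `b < e^{-e}`, where `G b = exp (w * exp (-1/w))` with `w` the
unique element of `(-1, 0)` such that `w * exp w = 1 / ln b` (i.e.
`w = W(1 / ln b)` for the principal branch of the Lambert `W` function). -/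
def gLe (b a : ℝ) : Prop :=
  ∀ w ∈ Set.Ioo (-1 : ℝ) 0, w * Real.exp w = 1 / Real.log b →
    Real.exp (w * Real.exp (-1 / w)) ≤ a

namespace TowerAux

lemma tower_succ (c : ℕ → ℝ) (n : ℕ) :
    tower c (n + 1) = c 1 ^ tower (fun k => c (k + 1)) n := rfl

lemma tower_add_two (c : ℕ → ℝ) (n : ℕ) :
    tower c (n + 2) = c 1 ^ (c 2 ^ tower (fun k => c (k + 2)) n) := rfl

section Det

variable {a b u v : ℝ}

lemma tower_mem (ha0 : 0 < a) (hb1 : b ≤ 1) :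
    ∀ (n : ℕ) (c : ℕ → ℝ), (∀ i, a ≤ c i ∧ c i ≤ b) →
      0 < tower c n ∧ tower c n ≤ 1 := by
  intro n
  induction n with
  | zero => intro c _; simp [tower]
  | succ n ih =>
    intro c hc
    have hc1 : 0 < c 1 := lt_of_lt_of_le ha0 (hc 1).1
    have hc1' : c 1 ≤ 1 := le_trans (hc 1).2 hb1
    obtain ⟨ht0, ht1⟩ := ih (fun k => c (k + 1)) (fun i => hc (i + 1))
    rw [tower_succ]
    exact ⟨Real.rpow_pos_of_pos hc1 _, Real.rpow_le_one hc1.le hc1' ht0.le⟩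

lemma even_lb (ha0 : 0 < a) (hb1 : b ≤ 1) (hv0 : 0 < v) (hv1 : v ≤ 1)
    (Hv : v ≤ a ^ (b ^ v)) :
    ∀ (n : ℕ) (c : ℕ → ℝ), (∀ i, a ≤ c i ∧ c i ≤ b) → v ≤ tower c (2 * n) := by
  intro n
  induction n with
  | zero => intro c _; simpa [tower] using hv1
  | succ n ih =>
    intro c hc
    have e : 2 * (n + 1) = 2 * n + 2 := by ring
    rw [e, tower_add_two]
    have hc' : ∀ i, a ≤ c (i + 2) ∧ c (i + 2) ≤ b := fun i => hc (i + 2)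
    have ht := ih (fun k => c (k + 2)) hc'
    obtain ⟨ht0, ht1⟩ := tower_mem ha0 hb1 (2 * n) (fun k => c (k + 2)) hc'
    have hc1 : 0 < c 1 := lt_of_lt_of_le ha0 (hc 1).1
    have hc1' : c 1 ≤ 1 := le_trans (hc 1).2 hb1
    have hc2 : 0 < c 2 := lt_of_lt_of_le ha0 (hc 2).1
    have hc2' : c 2 ≤ 1 := le_trans (hc 2).2 hb1
    have step1 : c 2 ^ tower (fun k => c (k + 2)) (2 * n) ≤ b ^ v :=
      calc c 2 ^ tower (fun k => c (k + 2)) (2 * n) ≤ c 2 ^ v :=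
            Real.rpow_le_rpow_of_exponent_ge hc2 hc2' ht
        _ ≤ b ^ v := Real.rpow_le_rpow hc2.le (hc 2).2 hv0.le
    calc v ≤ a ^ (b ^ v) := Hv
      _ ≤ c 1 ^ (b ^ v) :=
          Real.rpow_le_rpow ha0.le (hc 1).1
            (Real.rpow_nonneg (le_trans (le_trans ha0.le (hc 1).1) (hc 1).2) v)
      _ ≤ c 1 ^ (c 2 ^ tower (fun k => c (k + 2)) (2 * n)) :=
          Real.rpow_le_rpow_of_exponent_ge hc1 hc1' step1

lemma odd_ub (ha0 : 0 < a) (hb1 : b ≤ 1) (hbu : b ≤ u) (hu0 : 0 < u)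
    (Hau : v ≤ a ^ u) (Hbv : b ^ v ≤ u) (hv0 : 0 < v) :
    ∀ (n : ℕ) (c : ℕ → ℝ), (∀ i, a ≤ c i ∧ c i ≤ b) → tower c (2 * n + 1) ≤ u := by
  intro n
  induction n with
  | zero =>
    intro c hc
    have : tower c 1 = c 1 ^ (1 : ℝ) := by rw [tower_succ]; norm_num [tower]
    rw [show 2 * 0 + 1 = 1 by ring, this, Real.rpow_one]
    exact le_trans (hc 1).2 hbu
  | succ n ih =>
    intro c hc
    have e : 2 * (n + 1) + 1 = (2 * n + 1) + 2 := by ring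
    rw [e, tower_add_two]
    have hc' : ∀ i, a ≤ c (i + 2) ∧ c (i + 2) ≤ b := fun i => hc (i + 2)
    have ht := ih (fun k => c (k + 2)) hc'
    obtain ⟨ht0, ht1⟩ := tower_mem ha0 hb1 (2 * n + 1) (fun k => c (k + 2)) hc'
    have hc1 : 0 < c 1 := lt_of_lt_of_le ha0 (hc 1).1
    have hc1' : c 1 ≤ 1 := le_trans (hc 1).2 hb1
    have hc2 : 0 < c 2 := lt_of_lt_of_le ha0 (hc 2).1
    have hc2' : c 2 ≤ 1 := le_trans (hc 2).2 hb1
    have step1 : v ≤ c 2 ^ tower (fun k => c (k + 2)) (2 * n + 1) :=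
      calc v ≤ a ^ u := Hau
        _ ≤ c 2 ^ u := Real.rpow_le_rpow ha0.le (hc 2).1 hu0.le
        _ ≤ c 2 ^ tower (fun k => c (k + 2)) (2 * n + 1) :=
            Real.rpow_le_rpow_of_exponent_ge hc2 hc2' ht
    calc c 1 ^ (c 2 ^ tower (fun k => c (k + 2)) (2 * n + 1)) ≤ c 1 ^ v :=
          Real.rpow_le_rpow_of_exponent_ge hc1 hc1' step1
      _ ≤ b ^ v := Real.rpow_le_rpow hc1.le (hc 1).2 hv0.le
      _ ≤ u := Hbv

lemma steps (ha0 : 0 < a) (hb1 : b ≤ 1) :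
    ∀ (n : ℕ) (c : ℕ → ℝ), (∀ i, a ≤ c i ∧ c i ≤ b) →
      tower c (2 * n + 2) ≤ tower c (2 * n) ∧
      tower c (2 * n + 1) ≤ tower c (2 * n + 3) := by
  intro n
  induction n with
  | zero =>
    intro c hc
    have hc1 : 0 < c 1 := lt_of_lt_of_le ha0 (hc 1).1
    have hc1' : c 1 ≤ 1 := le_trans (hc 1).2 hb1
    constructor
    · have := tower_mem ha0 hb1 2 c hc
      simpa [tower] using this.2
    · have h2 : tower (fun k => c (k + 1)) 2 ≤ 1 :=
        (tower_mem ha0 hb1 2 (fun k => c (k + 1)) (fun i => hc (i + 1))).2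
      have h1 : tower c 1 = c 1 ^ (1 : ℝ) := by rw [tower_succ]; norm_num [tower]
      have h3 : tower c 3 = c 1 ^ tower (fun k => c (k + 1)) 2 := tower_succ c 2
      rw [show 2 * 0 + 1 = 1 by ring, show 2 * 0 + 3 = 3 by ring, h1, h3]
      exact Real.rpow_le_rpow_of_exponent_ge hc1 hc1' h2
  | succ n ih =>
    have h1 : ∀ (c : ℕ → ℝ), (∀ i, a ≤ c i ∧ c i ≤ b) →
        tower c (2 * (n + 1) + 2) ≤ tower c (2 * (n + 1)) := by
      intro c hc
      have hc1 : 0 < c 1 := lt_of_lt_of_le ha0 (hc 1).1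
      have hc1' : c 1 ≤ 1 := le_trans (hc 1).2 hb1
      have hmono := (ih (fun k => c (k + 1)) (fun i => hc (i + 1))).2
      have e1 : 2 * (n + 1) + 2 = (2 * n + 3) + 1 := by ring
      have e2 : 2 * (n + 1) = (2 * n + 1) + 1 := by ring
      rw [e1, e2, tower_succ, tower_succ]
      exact Real.rpow_le_rpow_of_exponent_ge hc1 hc1' hmono
    intro c hc
    refine ⟨h1 c hc, ?_⟩
    have hc1 : 0 < c 1 := lt_of_lt_of_le ha0 (hc 1).1
    have hc1' : c 1 ≤ 1 := le_trans (hc 1).2 hb1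
    have hanti := h1 (fun k => c (k + 1)) (fun i => hc (i + 1))
    have e1 : 2 * (n + 1) + 1 = (2 * (n + 1)) + 1 := rfl
    have e2 : 2 * (n + 1) + 3 = (2 * (n + 1) + 2) + 1 := by ring
    rw [e2, tower_succ, tower_succ]
    exact Real.rpow_le_rpow_of_exponent_ge hc1 hc1' hanti

lemma det (ha0 : 0 < a) (hb1 : b ≤ 1) (hbu : b ≤ u) (hu0 : 0 < u) (hv0 : 0 < v)
    (hv1 : v ≤ 1) (huv : u < v) (Hau : v ≤ a ^ u) (Hbv : b ^ v ≤ u)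
    (Hv : v ≤ a ^ (b ^ v)) (c : ℕ → ℝ) (hc : ∀ i, a ≤ c i ∧ c i ≤ b) :
    ∃ L₁ L₂ : ℝ,
      Tendsto (fun n => tower c (2 * n)) atTop (nhds L₁) ∧
      Tendsto (fun n => tower c (2 * n + 1)) atTop (nhds L₂) ∧
      L₁ ≠ L₂ := by
  have hanti : Antitone (fun n => tower c (2 * n)) := by
    apply antitone_nat_of_succ_le
    intro n
    have := (steps ha0 hb1 n c hc).1
    simpa [show 2 * (n + 1) = 2 * n + 2 by ring] using this
  have hmono : Monotone (fun n => tower c (2 * n + 1)) := by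
    apply monotone_nat_of_le_succ
    intro n
    have := (steps ha0 hb1 n c hc).2
    simpa [show 2 * (n + 1) + 1 = 2 * n + 3 by ring] using this
  have hlb : ∀ n, v ≤ tower c (2 * n) := fun n => even_lb ha0 hb1 hv0 hv1 Hv n c hc
  have hub : ∀ n, tower c (2 * n + 1) ≤ u := fun n =>
    odd_ub ha0 hb1 hbu hu0 Hau Hbv hv0 n c hc
  have hbdd1 : BddBelow (Set.range fun n => tower c (2 * n)) := by
    refine ⟨v, ?_⟩
    rintro x ⟨n, rfl⟩
    exact hlb n
  have hbdd2 : BddAbove (Set.range fun n => tower c (2 * n + 1)) := by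
    refine ⟨u, ?_⟩
    rintro x ⟨n, rfl⟩
    exact hub n
  refine ⟨⨅ n, tower c (2 * n), ⨆ n, tower c (2 * n + 1),
    tendsto_atTop_ciInf hanti hbdd1, tendsto_atTop_ciSup hmono hbdd2, ?_⟩
  have h1 : v ≤ ⨅ n, tower c (2 * n) := le_ciInf hlb
  have h2 : (⨆ n, tower c (2 * n + 1)) ≤ u := ciSup_le hub
  exact (ne_of_lt (lt_of_le_of_lt h2 (lt_of_lt_of_le huv h1))).symm

end Det

lemma mSupport_compl_null (μ : Measure ℝ) : μ (mSupport μ)ᶜ = 0 := by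
  obtain ⟨T, hTc, hTS, hT⟩ := TopologicalSpace.isOpen_sUnion_countable
    {U : Set ℝ | IsOpen U ∧ μ U = 0} (fun s hs => hs.1)
  have hsub : (mSupport μ)ᶜ ⊆ ⋃₀ {U : Set ℝ | IsOpen U ∧ μ U = 0} := by
    intro x hx
    simp only [mSupport, mem_compl_iff, mem_setOf_eq, not_forall] at hx
    obtain ⟨U, hU, hxU, hpos⟩ := hx
    exact ⟨U, ⟨hU, le_antisymm (not_lt.mp hpos) zero_le⟩, hxU⟩
  have h0 : μ (⋃₀ {U : Set ℝ | IsOpen U ∧ μ U = 0}) = 0 := by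
    rw [← hT]
    exact (measure_sUnion_null_iff hTc).2 fun s hs => (hTS hs).2
  exact measure_mono_null hsub h0

end TowerAux

theorem stmt_3 {Ω : Type*} [MeasurableSpace Ω] (P : Measure Ω) [IsProbabilityMeasure P]
    (A : ℕ → Ω → ℝ) (hmeas : ∀ i, Measurable (A i))
    (hval : ∀ i, ∀ᵐ ω ∂P, A i ω ∈ Set.Ioc (0 : ℝ) 1)
    (hindep : iIndepFun A P)
    (hident : ∀ i, IdentDistrib (A i) (A 1) P P)
    (hb : sSup (mSupport (Measure.map (A 1) P)) < Real.exp (-Real.exp 1))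
    (ha : gLe (sSup (mSupport (Measure.map (A 1) P)))
      (sInf (mSupport (Measure.map (A 1) P)))) :
    ∀ᵐ ω ∂P, ∃ L₁ L₂ : ℝ,
      Tendsto (fun n => tower (fun k => A k ω) (2 * n)) atTop (nhds L₁) ∧
      Tendsto (fun n => tower (fun k => A k ω) (2 * n + 1)) atTop (nhds L₂) ∧
      L₁ ≠ L₂ := by
  classical
  set μ : Measure ℝ := Measure.map (A 1) P with hμdef
  haveI : IsProbabilityMeasure μ := Measure.isProbabilityMeasure_map (hmeas 1).aemeasurable
  set b : ℝ := sSup (mSupport μ) with hbdef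
  set a : ℝ := sInf (mSupport μ) with hadef
  -- basic support facts
  have hIoc : μ (Set.Ioc (0:ℝ) 1) = 1 := by
    rw [hμdef, Measure.map_apply (hmeas 1) measurableSet_Ioc]
    rw [← prob_compl_eq_zero_iff ((hmeas 1) measurableSet_Ioc)]
    exact ae_iff.mp (hval 1)
  have hcomplIoc : μ (Set.Ioc (0:ℝ) 1)ᶜ = 0 :=
    (prob_compl_eq_zero_iff measurableSet_Ioc).2 hIoc
  have hSnull : μ (mSupport μ)ᶜ = 0 := TowerAux.mSupport_compl_null μ
  have hsupset : ∀ T : Set ℝ, mSupport μ ⊆ T → μ T = 1 := by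
    intro T hT
    refine le_antisymm prob_le_one ?_
    have h1 : (1 : ENNReal) = μ Set.univ := (measure_univ).symm
    have h2 : μ Set.univ ≤ μ (mSupport μ) + μ (mSupport μ)ᶜ := by
      rw [← Set.union_compl_self (mSupport μ)]
      exact measure_union_le _ _
    rw [hSnull, add_zero] at h2
    exact h1.le.trans (h2.trans (measure_mono hT))
  have hsub01 : mSupport μ ⊆ Set.Icc (0:ℝ) 1 := by
    intro x hx
    constructor
    · by_contra h
      push_neg at h
      have hpos := hx (Set.Iio 0) isOpen_Iio h
      have : μ (Set.Iio 0) = 0 := by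
        refine measure_mono_null ?_ hcomplIoc
        intro y hy
        simp only [Set.mem_Iio] at hy
        simp only [Set.mem_compl_iff, Set.mem_Ioc, not_and, not_le]
        intro h0; linarith
      rw [this] at hpos; exact lt_irrefl _ hpos
    · by_contra h
      push_neg at h
      have hpos := hx (Set.Ioi 1) isOpen_Ioi h
      have : μ (Set.Ioi 1) = 0 := by
        refine measure_mono_null ?_ hcomplIoc
        intro y hy
        simp only [Set.mem_Ioi] at hy
        simp only [Set.mem_compl_iff, Set.mem_Ioc, not_and, not_le]
        intro h0; linarith
      rw [this] at hpos; exact lt_irrefl _ hpos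
  have hne : (mSupport μ).Nonempty := by
    by_contra h
    rw [Set.not_nonempty_iff_eq_empty] at h
    have := hsupset ∅ (by rw [h])
    simp at this
  have hbddb : BddBelow (mSupport μ) := ⟨0, fun x hx => (hsub01 hx).1⟩
  have hbdda : BddAbove (mSupport μ) := ⟨1, fun x hx => (hsub01 hx).2⟩
  have hab_sub : mSupport μ ⊆ Set.Icc a b :=
    fun x hx => ⟨csInf_le hbddb hx, le_csSup hbdda hx⟩
  have hIcc1 : μ (Set.Icc a b) = 1 := hsupset _ hab_sub
  have ha0' : 0 ≤ a := le_csInf hne fun x hx => (hsub01 hx).1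
  have hb0 : 0 < b := by
    by_contra h
    push_neg at h
    have hzero : μ (Set.Icc a b) = 0 := by
      refine measure_mono_null ?_ hcomplIoc
      intro y hy
      simp only [Set.mem_Icc] at hy
      simp only [Set.mem_compl_iff, Set.mem_Ioc, not_and, not_le]
      intro h0; linarith [hy.2]
    rw [hIcc1] at hzero; exact one_ne_zero hzero
  -- logarithm facts
  have hlb : Real.log b < -Real.exp 1 := by
    have := Real.log_lt_log hb0 hb
    rwa [Real.log_exp] at this
  have hE : (0:ℝ) < Real.exp 1 := Real.exp_pos 1
  have hlbneg : Real.log b < 0 := by linarith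
  have hlbne : Real.log b ≠ 0 := ne_of_lt hlbneg
  -- construct w via IVT
  have hy0 : 1 / Real.log b < 0 := div_neg_of_pos_of_neg one_pos hlbneg
  have hy1 : -Real.exp (-1) < 1 / Real.log b := by
    have h1 : (1:ℝ) / (-Real.log b) < 1 / Real.exp 1 :=
      one_div_lt_one_div_of_lt hE (by linarith)
    have h2 : (1:ℝ) / Real.log b = -(1 / (-Real.log b)) := by
      field_simp
    rw [Real.exp_neg, h2, ← one_div]
    linarith
  have hcont : ContinuousOn (fun w : ℝ => w * Real.exp w) (Set.Icc (-1) 0) :=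
    (continuous_id.mul Real.continuous_exp).continuousOn
  have hivt := intermediate_value_Ioo (by norm_num : (-1:ℝ) ≤ 0) hcont
  have hymem : 1 / Real.log b ∈
      Set.Ioo ((-1:ℝ) * Real.exp (-1)) ((0:ℝ) * Real.exp 0) := by
    constructor
    · simpa using hy1
    · simpa using hy0
  obtain ⟨w, hwmem, hfw⟩ := hivt hymem
  obtain ⟨hw1, hw0⟩ := hwmem
  have hfw' : w * Real.exp w = 1 / Real.log b := hfw
  have hwne : w ≠ 0 := ne_of_lt hw0
  have hga : Real.exp (w * Real.exp (-1 / w)) ≤ a := ha w ⟨hw1, hw0⟩ hfw'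
  -- the key quantities
  set u : ℝ := Real.exp w⁻¹ with hudef
  set v : ℝ := Real.exp w with hvdef
  have hu0 : 0 < u := Real.exp_pos _
  have hv0 : 0 < v := Real.exp_pos _
  have hv1 : v ≤ 1 := Real.exp_le_one_iff.2 hw0.le
  have ha0 : 0 < a := lt_of_lt_of_le (Real.exp_pos _) hga
  have hlbw : Real.log b * (w * Real.exp w) = 1 := by
    rw [hfw']; field_simp
  have huv : u < v := by
    rw [hudef, hvdef]
    apply Real.exp_lt_exp.2
    have hinv : w * w⁻¹ = 1 := mul_inv_cancel₀ hwne
    nlinarith [hinv, mul_pos (show (0:ℝ) < 1 - w by linarith) (show (0:ℝ) < 1 + w by linarith)]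
  have hbu : b ≤ u := by
    have h3 : Real.log b * w * Real.exp w = 1 := by linarith [hlbw]; 
    have h4 : Real.log b * w = Real.exp (-w) := by
      rw [Real.exp_neg]
      field_simp
      linear_combination h3
    have hge1 : 1 ≤ Real.log b * w := by
      rw [h4]; exact Real.one_le_exp (by linarith)
    have hlog : Real.log b ≤ w⁻¹ := by
      by_contra h
      push_neg at h
      have := mul_lt_mul_of_neg_right h hw0
      rw [inv_mul_cancel₀ hwne] at this
      linarith
    calc b = Real.exp (Real.log b) := (Real.exp_log hb0).symm
      _ ≤ u := Real.exp_le_exp.2 hlog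
  have hb1 : b ≤ 1 := hbu.trans (huv.le.trans hv1)
  -- identities
  have hbv : b ^ v = u := by
    rw [Real.rpow_def_of_pos hb0, hudef, hvdef]
    congr 1
    have h5 : (Real.log b * Real.exp w) * w = 1 := by linear_combination hlbw
    exact eq_inv_of_mul_eq_one_left h5
  have hgu : Real.exp (w * Real.exp (-1 / w)) ^ u = v := by
    rw [Real.rpow_def_of_pos (Real.exp_pos _), Real.log_exp, hudef, hvdef]
    congr 1
    have : w * Real.exp (-1 / w) * Real.exp w⁻¹ = w * Real.exp (-1 / w + w⁻¹) := by
      rw [Real.exp_add]; ring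
    rw [this, show (-1) / w + w⁻¹ = 0 by field_simp; ring, Real.exp_zero, mul_one]
  have Hau : v ≤ a ^ u := by
    calc v = Real.exp (w * Real.exp (-1 / w)) ^ u := hgu.symm
      _ ≤ a ^ u := Real.rpow_le_rpow (Real.exp_pos _).le hga hu0.le
  have Hbv : b ^ v ≤ u := le_of_eq hbv
  have Hv : v ≤ a ^ (b ^ v) := by rw [hbv]; exact Hau
  -- almost-sure membership in [a, b]
  have hae : ∀ i, ∀ᵐ ω ∂P, A i ω ∈ Set.Icc a b := by
    intro i
    have hm : MeasurableSet (A i ⁻¹' Set.Icc a b) := (hmeas i) measurableSet_Icc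
    have hP : P (A i ⁻¹' Set.Icc a b) = 1 := by
      rw [← Measure.map_apply (hmeas i) measurableSet_Icc, (hident i).map_eq,
        ← hμdef]
      exact hIcc1
    have hc0 : P (A i ⁻¹' Set.Icc a b)ᶜ = 0 :=
      (prob_compl_eq_zero_iff hm).2 hP
    rw [ae_iff]
    convert hc0 using 2
    rfl
  have haeall : ∀ᵐ ω ∂P, ∀ i, A i ω ∈ Set.Icc a b := ae_all_iff.2 hae
  filter_upwards [haeall] with ω hω
  exact TowerAux.det ha0 hb1 hbu hu0 hv0 hv1 huv Hau Hbv Hv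
    (fun k => A k ω) (fun i => ⟨(hω i).1, (hω i).2⟩)
end

section
/- For every x ∈ (0, e^{−e}), one has 1/ln x ∈ (−1/e, 0); let w be the unique element of (−1, 0) with w·e^w = 1/ln x. Then G(x) := exp(w · exp(−1/w)) satisfies G(x) ≤ x. -/
lemma key_ineq (t : ℝ) (ht : 0 < t) (ht1 : t ≤ 1) :
    t - t⁻¹ ≤ 2 * Real.log t := by
  set h : ℝ → ℝ := fun s => 2 * Real.log s - s + s⁻¹ with hh
  have hd : ∀ s ∈ Set.Ioi (0:ℝ), HasDerivAt h (2 * s⁻¹ - 1 + -(s^2)⁻¹) s := by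
    intro s hs
    have hs0 : s ≠ 0 := ne_of_gt hs
    have h1 := (Real.hasDerivAt_log hs0).const_mul 2
    have h2 := hasDerivAt_id s
    have h3 := hasDerivAt_inv hs0
    have := (h1.sub h2).add h3
    exact this
  have hanti : AntitoneOn h (Set.Ioi 0) := by
    apply antitoneOn_of_deriv_nonpos (convex_Ioi 0)
    · exact fun s hs => ((hd s hs).continuousAt).continuousWithinAt
    · intro s hs
      rw [interior_Ioi] at hs
      exact (hd s hs).differentiableAt.differentiableWithinAt
    · intro s hs
      rw [interior_Ioi] at hs
      rw [(hd s hs).deriv]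
      have hs0 : (0:ℝ) < s := hs
      have heq : 2 * s⁻¹ - 1 + -(s^2)⁻¹ = -((s-1)^2 / s^2) := by
        field_simp
        ring
      rw [heq]
      have : 0 ≤ (s-1)^2 / s^2 := by positivity
      linarith
  have h1 : h 1 ≤ h t := hanti ht (by norm_num) ht1
  have h0 : h 1 = 0 := by simp [hh]
  simp only [hh] at h1 h0
  linarith

theorem stmt_10 (x : ℝ) (hx : x ∈ Set.Ioo 0 (Real.exp (-Real.exp 1))) :
    (1 / Real.log x ∈ Set.Ioo (-(1 / Real.exp 1)) 0) ∧
    (∃! w : ℝ, w ∈ Set.Ioo (-1 : ℝ) 0 ∧ w * Real.exp w = 1 / Real.log x) ∧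
    ∀ w ∈ Set.Ioo (-1 : ℝ) 0, w * Real.exp w = 1 / Real.log x →
      Real.exp (w * Real.exp (-1 / w)) ≤ x := by
  obtain ⟨hx0, hx1⟩ := hx
  have he : (0:ℝ) < Real.exp 1 := Real.exp_pos 1
  have hlog : Real.log x < -Real.exp 1 := by
    have := Real.log_lt_log hx0 hx1
    rwa [Real.log_exp] at this
  have hl0 : Real.log x < 0 := by linarith
  -- Part 1
  have part1 : 1 / Real.log x ∈ Set.Ioo (-(1 / Real.exp 1)) 0 := by
    constructor
    · rw [lt_div_iff_of_neg hl0]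
      have h1 : (1 / Real.exp 1) * Real.exp 1 = 1 := by field_simp
      nlinarith [mul_pos (one_div_pos.mpr he) (by linarith : (0:ℝ) < -Real.log x - Real.exp 1)]
    · exact div_neg_of_pos_of_neg one_pos hl0
  refine ⟨part1, ?_, ?_⟩
  -- Part 2
  · set f : ℝ → ℝ := fun w => w * Real.exp w with hf
    have hcont : ContinuousOn f (Set.Icc (-1) 0) := by
      apply Continuous.continuousOn
      exact continuous_id.mul Real.continuous_exp
    have hmono : StrictMonoOn f (Set.Icc (-1) 0) := by
      apply strictMonoOn_of_deriv_pos (convex_Icc _ _) hcont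
      intro w hw
      rw [interior_Icc] at hw
      have hda : HasDerivAt f (1 * Real.exp w + w * Real.exp w) w :=
        (hasDerivAt_id w).mul (Real.hasDerivAt_exp w)
      rw [hda.deriv]
      have := Real.exp_pos w
      nlinarith [hw.1]
    have hsub := intermediate_value_Ioo (by norm_num : (-1:ℝ) ≤ 0) hcont
    have hfm1 : f (-1) = -(1 / Real.exp 1) := by
      simp [hf, Real.exp_neg, one_div]
    have hf0 : f 0 = 0 := by simp [hf]
    rw [hfm1, hf0] at hsub
    obtain ⟨w, hwmem, hfw⟩ := hsub part1
    refine ⟨w, ⟨hwmem, hfw⟩, ?_⟩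
    rintro y ⟨hy, hfy⟩
    exact hmono.injOn (Set.Ioo_subset_Icc_self hy) (Set.Ioo_subset_Icc_self hwmem)
      (hfy.trans hfw.symm)
  -- Part 3
  · rintro w ⟨hw1, hw2⟩ hfw
    set t : ℝ := -w with hdef
    have ht : 0 < t := by simp [hdef]; linarith
    have ht1 : t ≤ 1 := by simp [hdef]; linarith
    have ht0 : t ≠ 0 := ne_of_gt ht
    have hwt : w = -t := by simp [hdef]
    have hlx : Real.log x = (w * Real.exp w)⁻¹ := by
      rw [hfw, one_div, inv_inv]
    -- reduce to log inequality
    conv_rhs => rw [← Real.exp_log hx0]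
    rw [Real.exp_le_exp, hlx]
    -- key inequality in t
    have hk := key_ineq t ht ht1
    have hexp2 : Real.exp (2 * Real.log t) = t^2 := by
      rw [show (2:ℝ) * Real.log t = Real.log t + Real.log t by ring, Real.exp_add,
        Real.exp_log ht, sq]
    have h1 : Real.exp (t - t⁻¹) ≤ t^2 := by
      rw [← hexp2]
      exact Real.exp_le_exp.mpr hk
    have h2 : Real.exp t ≤ t^2 * Real.exp t⁻¹ := by
      have : Real.exp t = Real.exp (t - t⁻¹) * Real.exp t⁻¹ := by
        rw [← Real.exp_add]; ring_nf
      rw [this]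
      exact mul_le_mul_of_nonneg_right h1 (Real.exp_pos _).le
    have hrhs : (w * Real.exp w)⁻¹ = -(Real.exp t / t) := by
      rw [hwt, Real.exp_neg, mul_inv, inv_inv, inv_neg, div_eq_mul_inv]
      ring
    have harg : -1 / w = t⁻¹ := by
      rw [hwt, neg_div_neg_eq, one_div]
    have hlhs : w * Real.exp (-1 / w) = -(t * Real.exp t⁻¹) := by
      rw [harg, hwt]; ring
    rw [hrhs, hlhs, neg_le_neg_iff, div_le_iff₀ ht]
    nlinarith [Real.exp_pos t⁻¹, h2]
end

section
/- If U, V, W are independent random variables, each uniformly distributed on (0, 1), then (UV)^W is also uniformly distributed on (0, 1); that is, (UV)^W has the same distribution as W. -/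
open MeasureTheory ProbabilityTheory Set Filter Topology
open scoped ENNReal

lemma lintegral_Ioc_eq_sub {f F : ℝ → ℝ} {a b : ℝ} (hab : a < b) (hm : Measurable f)
    (hcf : ContinuousOn f (Ioc a b)) (hnn : ∀ s ∈ Ioc a b, 0 ≤ f s)
    (hcF : ContinuousOn F (Icc a b)) (hd : ∀ s ∈ Ioo a b, HasDerivAt F (f s) s) :
    ∫⁻ s in Ioc a b, ENNReal.ofReal (f s) = ENNReal.ofReal (F b - F a) := by
  set u : ℕ → ℝ := fun n => a + (b - a) / (n + 1) with hu
  have hba : 0 < b - a := sub_pos.2 hab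
  have hua : ∀ n, a < u n := fun n => by
    have : 0 < (b - a) / ((n : ℝ) + 1) := div_pos hba (by positivity)
    simp [hu]; linarith
  have hub : ∀ n, u n ≤ b := fun n => by
    have h1 : (b - a) / ((n : ℝ) + 1) ≤ (b - a) / 1 := by
      apply div_le_div_of_nonneg_left hba.le one_pos
      · linarith [Nat.cast_nonneg (α := ℝ) n]
    simp only [hu]; simp at h1 ⊢; linarith
  have hmono : Monotone fun n : ℕ => Set.Ioc (u n) b := by
    intro m n hmn
    apply Ioc_subset_Ioc_left
    simp only [hu]
    have : (b - a) / ((n : ℝ) + 1) ≤ (b - a) / ((m : ℝ) + 1) := by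
      apply div_le_div_of_nonneg_left hba.le (by positivity)
      exact_mod_cast by exact_mod_cast add_le_add_left (Nat.cast_le.2 hmn) 1
    linarith
  have hulim : Tendsto u atTop (𝓝 a) := by
    have : Tendsto (fun n : ℕ => (b - a) / (n + 1)) atTop (𝓝 0) := by
      have h0 := (tendsto_const_div_atTop_nhds_zero_nat (b - a)).comp (tendsto_add_atTop_nat 1)
      refine h0.congr fun n => ?_
      simp [Function.comp, Nat.cast_add]
    simpa using tendsto_const_nhds.add this
  -- indicator functions
  set φ : ℕ → ℝ → ℝ≥0∞ := fun n => (Ioc (u n) b).indicator (fun s => ENNReal.ofReal (f s)) with hφ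
  have hφmeas : ∀ n, Measurable (φ n) := fun n =>
    (hm.ennreal_ofReal).indicator measurableSet_Ioc
  have hφmono : Monotone φ := fun m n hmn =>
    indicator_le_indicator_of_subset (hmono hmn) (fun _ => zero_le)
  have hφsup : ∀ s, (⨆ n, φ n s) = (Ioc a b).indicator (fun s => ENNReal.ofReal (f s)) s := by
    intro s
    by_cases hs : s ∈ Ioc a b
    · rw [indicator_of_mem hs]
      obtain ⟨n, hn⟩ : ∃ n : ℕ, u n < s := by
        have := hulim.eventually_lt_const hs.1
        exact this.exists
      apply le_antisymm
      · exact iSup_le fun n => by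
          by_cases h : s ∈ Ioc (u n) b
          · rw [hφ]; simp only [indicator_of_mem h]; exact le_rfl
          · rw [hφ]; simp only [indicator_of_notMem h]; exact zero_le
      · refine le_iSup_of_le n ?_
        rw [hφ]
        dsimp only
        rw [Set.indicator_of_mem (show s ∈ Ioc (u n) b from ⟨hn, hs.2⟩)]
    · rw [indicator_of_notMem hs]
      refine le_antisymm (iSup_le fun n => ?_) zero_le
      have : s ∉ Ioc (u n) b := fun h => hs ⟨(hua n).trans h.1, h.2⟩
      rw [hφ]; simp [indicator_of_notMem this]
  have key : ∫⁻ s in Ioc a b, ENNReal.ofReal (f s) = ⨆ n, ∫⁻ s, φ n s := by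
    rw [← lintegral_indicator measurableSet_Ioc, ← lintegral_iSup hφmeas hφmono]
    exact lintegral_congr fun s => (hφsup s).symm
  have hval : ∀ n, ∫⁻ s, φ n s = ENNReal.ofReal (F b - F (u n)) := by
    intro n
    rw [hφ]
    rw [lintegral_indicator measurableSet_Ioc]
    have hsub : Icc (u n) b ⊆ Ioc a b := fun s hs => ⟨(hua n).trans_le hs.1, hs.2⟩
    have hcfn : ContinuousOn f (Icc (u n) b) := hcf.mono hsub
    have hint : IntegrableOn f (Ioc (u n) b) volume :=
      hcfn.integrableOn_Icc.mono_set Ioc_subset_Icc_self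
    rw [← ofReal_integral_eq_lintegral_ofReal hint]
    · congr 1
      rw [← intervalIntegral.integral_of_le (hub n)]
      apply intervalIntegral.integral_eq_sub_of_hasDeriv_right_of_le (hub n)
        (hcF.mono (fun s hs => ⟨(hua n).le.trans hs.1, hs.2⟩))
      · intro s hs
        exact (hd s ⟨(hua n).trans hs.1, hs.2⟩).hasDerivWithinAt
      · exact hcfn.intervalIntegrable_of_Icc (hub n)
    · filter_upwards [ae_restrict_mem measurableSet_Ioc] with s hs
      exact hnn s (hsub (Ioc_subset_Icc_self hs))
  rw [key]
  simp only [hval]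
  have hFlim : Tendsto (fun n => ENNReal.ofReal (F b - F (u n))) atTop
      (𝓝 (ENNReal.ofReal (F b - F a))) := by
    apply ENNReal.tendsto_ofReal
    apply Tendsto.const_sub
    have hFa : ContinuousWithinAt F (Icc a b) a := hcF a ⟨le_rfl, hab.le⟩
    refine hFa.tendsto.comp ?_
    apply tendsto_nhdsWithin_iff.2 ⟨hulim, ?_⟩
    exact Eventually.of_forall fun n => ⟨(hua n).le, hub n⟩
  have hFmono : Monotone fun n => ENNReal.ofReal (F b - F (u n)) := by
    intro m n hmn
    dsimp only
    rw [← hval m, ← hval n]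
    exact lintegral_mono (hφmono hmn)
  exact tendsto_nhds_unique (tendsto_atTop_iSup hFmono) hFlim

lemma prodCDF {y : ℝ} (hy0 : 0 < y) (hy1 : y < 1) :
    ((volume.restrict (Ioo (0:ℝ) 1)).prod (volume.restrict (Ioo (0:ℝ) 1)))
      {p : ℝ × ℝ | p.1 * p.2 ∈ Ioc 0 y} = ENNReal.ofReal (y - y * Real.log y) := by
  set μ := volume.restrict (Ioo (0:ℝ) 1) with hμ
  have hSm : MeasurableSet {p : ℝ × ℝ | p.1 * p.2 ∈ Ioc 0 y} :=
    (measurable_fst.mul measurable_snd) measurableSet_Ioc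
  rw [Measure.prod_apply hSm]
  have hres : ∀ u : ℝ, 0 < u →
      μ (Prod.mk u ⁻¹' {p : ℝ × ℝ | p.1 * p.2 ∈ Ioc 0 y}) = volume (Ioc (0:ℝ) (y/u) ∩ Ioo 0 1) := by
    intro u hu
    have : Prod.mk u ⁻¹' {p : ℝ × ℝ | p.1 * p.2 ∈ Ioc 0 y} = Ioc (0:ℝ) (y/u) := by
      ext v
      simp only [mem_preimage, mem_setOf_eq, mem_Ioc]
      constructor
      · rintro ⟨h1, h2⟩
        refine ⟨by nlinarith, (le_div_iff₀ hu).2 (by linarith [mul_comm u v])⟩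
      · rintro ⟨h1, h2⟩
        exact ⟨mul_pos hu h1, by have := (le_div_iff₀ hu).1 h2; linarith [mul_comm u v]⟩
    rw [this, hμ, Measure.restrict_apply measurableSet_Ioc]
  have hsplit : Ioo (0:ℝ) 1 = Ioc 0 y ∪ Ioo y 1 := (Ioc_union_Ioo_eq_Ioo hy0.le hy1).symm
  rw [show (∫⁻ u, μ (Prod.mk u ⁻¹' {p : ℝ × ℝ | p.1 * p.2 ∈ Ioc 0 y}) ∂μ)
      = ∫⁻ u in Ioo (0:ℝ) 1, μ (Prod.mk u ⁻¹' {p : ℝ × ℝ | p.1 * p.2 ∈ Ioc 0 y}) ∂volume from rfl,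
    hsplit, lintegral_union measurableSet_Ioo (disjoint_left.2 fun u h1 h2 => (not_le.2 h2.1) h1.2)]
  have hpiece1 : (∫⁻ u in Ioc (0:ℝ) y, μ (Prod.mk u ⁻¹' {p : ℝ × ℝ | p.1 * p.2 ∈ Ioc 0 y}) ∂volume)
      = ENNReal.ofReal y := by
    rw [setLIntegral_congr_fun measurableSet_Ioc (fun u hu => ?_), setLIntegral_one,
      Real.volume_Ioc, sub_zero]
    rw [hres u hu.1]
    have h1 : (1:ℝ) ≤ y / u := (le_div_iff₀ hu.1).2 (by simpa using hu.2)
    have : Ioc (0:ℝ) (y/u) ∩ Ioo 0 1 = Ioo 0 1 := by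
      apply inter_eq_self_of_subset_right
      intro v hv
      exact ⟨hv.1, hv.2.le.trans h1⟩
    rw [this, Real.volume_Ioo]
    simp
  have hpiece2 : (∫⁻ u in Ioo y 1, μ (Prod.mk u ⁻¹' {p : ℝ × ℝ | p.1 * p.2 ∈ Ioc 0 y}) ∂volume)
      = ENNReal.ofReal (-(y * Real.log y)) := by
    rw [setLIntegral_congr_fun measurableSet_Ioo
      (fun u hu => show _ = ENNReal.ofReal (y / u) from ?_)]
    · rw [Measure.restrict_congr_set Ioo_ae_eq_Ioc,
        lintegral_Ioc_eq_sub (f := fun u => y / u) (F := fun u => y * Real.log u) hy1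
          (measurable_const.div measurable_id)
          (continuousOn_const.div continuousOn_id (fun u hu => (hy0.trans hu.1).ne'))
          (fun u hu => div_nonneg hy0.le ((hy0.trans hu.1).le))
          (ContinuousOn.mul continuousOn_const
            (Real.continuousOn_log.mono (fun u hu => (hy0.trans_le hu.1).ne')))
          (fun u hu => by
            have := (Real.hasDerivAt_log (hy0.trans hu.1).ne').const_mul y
            simpa [div_eq_mul_inv] using this)]
      simp [Real.log_one]
    · rw [hres u (hy0.trans hu.1)]
      have h1 : y / u < 1 := (div_lt_one (hy0.trans hu.1)).2 hu.1
      have h0 : 0 < y / u := div_pos hy0 (hy0.trans hu.1)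
      have : Ioc (0:ℝ) (y/u) ∩ Ioo 0 1 = Ioc 0 (y/u) := by
        apply inter_eq_self_of_subset_left
        intro v hv
        exact ⟨hv.1, hv.2.trans_lt h1⟩
      rw [this, Real.volume_Ioc, sub_zero]
  rw [hpiece1, hpiece2, ← ENNReal.ofReal_add hy0.le]
  · ring_nf
  · rw [neg_nonneg]
    exact mul_nonpos_of_nonneg_of_nonpos hy0.le (Real.log_nonpos hy0.le hy1.le)

set_option maxHeartbeats 1000000 in
theorem stmt_13 {Ω : Type*} [MeasurableSpace Ω] (P : Measure Ω) [IsProbabilityMeasure P]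
    (U V W : Ω → ℝ) (hU : Measurable U) (hV : Measurable V) (hW : Measurable W)
    (hindep : iIndepFun ![U, V, W] P)
    (hUunif : Measure.map U P = volume.restrict (Set.Ioo (0 : ℝ) 1))
    (hVunif : Measure.map V P = volume.restrict (Set.Ioo (0 : ℝ) 1))
    (hWunif : Measure.map W P = volume.restrict (Set.Ioo (0 : ℝ) 1)) :
    Measure.map (fun ω => (U ω * V ω) ^ W ω) P = Measure.map W P := by
  haveI hμprob : IsProbabilityMeasure (volume.restrict (Ioo (0:ℝ) 1)) := ⟨by
    rw [Measure.restrict_apply MeasurableSet.univ, univ_inter, Real.volume_Ioo]; simp⟩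
  have hX : Measurable (fun ω => U ω * V ω) := hU.mul hV
  have hrpow : Measurable (fun p : ℝ × ℝ => p.2 ^ p.1) := by measurability
  -- joint law of (U, V)
  have hUV : IndepFun U V P := by
    have h := hindep.indepFun (show (0 : Fin 3) ≠ 1 by decide)
    simpa using h
  have hpair : Measure.map (fun ω => (U ω, V ω)) P
      = (volume.restrict (Ioo (0:ℝ) 1)).prod (volume.restrict (Ioo (0:ℝ) 1)) := by
    have h := (indepFun_iff_map_prod_eq_prod_map_map hU.aemeasurable hV.aemeasurable).1 hUV
    rw [hUunif, hVunif] at h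
    exact h
  have hXmap : Measure.map (fun ω => U ω * V ω) P = Measure.map (fun p : ℝ × ℝ => p.1 * p.2)
      ((volume.restrict (Ioo (0:ℝ) 1)).prod (volume.restrict (Ioo (0:ℝ) 1))) := by
    rw [← hpair, Measure.map_map (show Measurable (fun p : ℝ × ℝ => p.1 * p.2) from measurable_fst.mul measurable_snd) (hU.prodMk hV)]
    rfl
  -- independence of X and W
  have hXW : IndepFun (fun ω => U ω * V ω) W P := by
    have h := hindep.indepFun_mul_left
      (fun i => by fin_cases i <;> [exact hU; exact hV; exact hW]) 0 1 2
      (by decide) (by decide)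
    exact h
  have hpair2 : Measure.map (fun ω => (W ω, U ω * V ω)) P
      = (volume.restrict (Ioo (0:ℝ) 1)).prod (Measure.map (fun ω => U ω * V ω) P) := by
    have h := (indepFun_iff_map_prod_eq_prod_map_map hW.aemeasurable hX.aemeasurable).1 hXW.symm
    rw [hWunif] at h
    exact h
  have hcomp : Measure.map (fun ω => (U ω * V ω) ^ W ω) P
      = Measure.map (fun p : ℝ × ℝ => p.2 ^ p.1)
        ((volume.restrict (Ioo (0:ℝ) 1)).prod (Measure.map (fun ω => U ω * V ω) P)) := by
    rw [← hpair2, Measure.map_map hrpow (hW.prodMk hX)]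
    rfl
  set ρ : Measure ℝ := Measure.map (fun ω => U ω * V ω) P with hρ
  haveI : IsProbabilityMeasure ρ := Measure.isProbabilityMeasure_map hX.aemeasurable
  -- ρ is concentrated on (0,1)
  have hnull : ρ (Ioo (0:ℝ) 1)ᶜ = 0 := by
    rw [hXmap, Measure.map_apply (show Measurable (fun p : ℝ × ℝ => p.1 * p.2) from measurable_fst.mul measurable_snd) measurableSet_Ioo.compl]
    have hc : (volume.restrict (Ioo (0:ℝ) 1)) (Ioo (0:ℝ) 1)ᶜ = 0 := by
      rw [Measure.restrict_apply measurableSet_Ioo.compl, compl_inter_self, measure_empty]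
    have hrect : ((volume.restrict (Ioo (0:ℝ) 1)).prod (volume.restrict (Ioo (0:ℝ) 1)))
        (((Ioo (0:ℝ) 1) ×ˢ (Ioo (0:ℝ) 1))ᶜ) = 0 := by
      have h1 : ((volume.restrict (Ioo (0:ℝ) 1)).prod (volume.restrict (Ioo (0:ℝ) 1)))
          (((Ioo (0:ℝ) 1)ᶜ ×ˢ (univ : Set ℝ))) = 0 := by
        rw [Measure.prod_prod]; simp [hc]
      have h2 : ((volume.restrict (Ioo (0:ℝ) 1)).prod (volume.restrict (Ioo (0:ℝ) 1)))
          (((univ : Set ℝ) ×ˢ (Ioo (0:ℝ) 1)ᶜ)) = 0 := by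
        rw [Measure.prod_prod]; simp [hc]
      refine measure_mono_null (fun p hp => ?_) (measure_union_null h1 h2)
      simp only [mem_compl_iff, mem_prod, mem_union, mem_univ, and_true, true_and] at hp ⊢
      by_contra hcon
      push_neg at hcon
      exact hp ⟨hcon.1, hcon.2⟩
    refine measure_mono_null (fun p hp => ?_) hrect
    simp only [mem_compl_iff, mem_preimage, mem_Ioo, mem_prod] at hp ⊢
    intro hcon
    exact hp ⟨mul_pos hcon.1.1 hcon.2.1, by nlinarith [hcon.1.2, hcon.2.2, hcon.1.1, hcon.2.1]⟩
  have hρIoc : ∀ y : ℝ, 0 < y → y < 1 →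
      ρ (Ioc 0 y) = ENNReal.ofReal (y - y * Real.log y) := by
    intro y hy0 hy1
    rw [hXmap, Measure.map_apply (show Measurable (fun p : ℝ × ℝ => p.1 * p.2) from measurable_fst.mul measurable_snd) measurableSet_Ioc]
    exact prodCDF hy0 hy1
  have hρfull : ρ (Ioo (0:ℝ) 1) = 1 := by
    calc ρ (Ioo (0:ℝ) 1) = ρ (univ ∩ Ioo (0:ℝ) 1) := by rw [univ_inter]
      _ = ρ univ := measure_inter_conull hnull
      _ = 1 := measure_univ
  -- now prove equality of measures via CDFs
  haveI : IsProbabilityMeasure (Measure.map (fun ω => (U ω * V ω) ^ W ω) P) :=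
    Measure.isProbabilityMeasure_map (hrpow.comp (hW.prodMk hX)).aemeasurable
  apply Measure.ext_of_Iic
  intro x
  rw [hWunif, Measure.restrict_apply measurableSet_Iic]
  rw [hcomp, Measure.map_apply hrpow measurableSet_Iic,
    Measure.prod_apply (hrpow measurableSet_Iic)]
  have hslice : ∀ w : ℝ, Prod.mk w ⁻¹' ((fun p : ℝ × ℝ => p.2 ^ p.1) ⁻¹' Iic x)
      = {s : ℝ | s ^ w ≤ x} := fun w => rfl
  rcases le_or_gt x 0 with hx0 | hx0
  · -- x ≤ 0
    have hempty : Iic x ∩ Ioo (0:ℝ) 1 = ∅ := by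
      ext s; simp only [mem_inter_iff, mem_Iic, mem_Ioo, mem_empty_iff_false, iff_false]
      rintro ⟨h1, h2, _⟩; linarith
    rw [hempty, measure_empty]
    rw [setLIntegral_congr_fun measurableSet_Ioo (fun w hw =>
      show _ = (0:ℝ≥0∞) from ?_), lintegral_zero]
    rw [hslice, ← measure_inter_conull hnull]
    have hemp2 : {s : ℝ | s ^ w ≤ x} ∩ Ioo 0 1 = ∅ := by
      ext s
      simp only [mem_inter_iff, mem_setOf_eq, mem_Ioo, mem_empty_iff_false, iff_false]
      rintro ⟨h1, h2, _⟩
      exact absurd h1 (not_le.2 (hx0.trans_lt (Real.rpow_pos_of_pos h2 w)))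
    rw [hemp2, measure_empty]
  · rcases lt_or_ge x 1 with hx1 | hx1
    · -- 0 < x < 1
      have hIic : Iic x ∩ Ioo (0:ℝ) 1 = Ioc 0 x := by
        ext s
        simp only [mem_inter_iff, mem_Iic, mem_Ioo, mem_Ioc]
        constructor
        · rintro ⟨h1, h2, _⟩; exact ⟨h2, h1⟩
        · rintro ⟨h1, h2⟩; exact ⟨h2, h1, h2.trans_lt hx1⟩
      rw [hIic, Real.volume_Ioc, sub_zero]
      rw [setLIntegral_congr_fun measurableSet_Ioo (fun w hw =>
        show _ = ENNReal.ofReal (x ^ w⁻¹ * (1 - Real.log x / w)) from ?_)]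
      · rw [Measure.restrict_congr_set Ioo_ae_eq_Ioc,
          lintegral_Ioc_eq_sub (f := fun w => x ^ w⁻¹ * (1 - Real.log x / w))
            (F := fun w => w * x ^ w⁻¹) one_pos
            (((continuous_iff_continuousAt.2 fun y =>
                Real.continuousAt_const_rpow hx0.ne').measurable.comp measurable_inv).mul
              (measurable_const.sub (measurable_const.div measurable_id))) ?hcf ?hnn ?hcF ?hd]
        · norm_num
        case hcf =>
          apply ContinuousOn.mul
          · intro w hw
            exact ((Real.continuousAt_const_rpow hx0.ne').comp
              (continuousAt_inv₀ hw.1.ne')).continuousWithinAt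
          · exact continuousOn_const.sub
              (continuousOn_const.div continuousOn_id (fun w hw => hw.1.ne'))
        case hnn =>
          intro w hw
          apply mul_nonneg (Real.rpow_nonneg hx0.le _)
          have : Real.log x / w ≤ 0 :=
            div_nonpos_of_nonpos_of_nonneg (Real.log_nonpos hx0.le hx1.le) hw.1.le
          linarith
        case hcF =>
          intro w hw
          rcases eq_or_lt_of_le hw.1 with h0 | h0
          · rw [← h0]
            have hsq : Tendsto (fun t : ℝ => t * x ^ t⁻¹) (𝓝[Icc (0:ℝ) 1] 0) (𝓝 0) := by
              apply squeeze_zero' (g := fun t => t)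
              · filter_upwards [self_mem_nhdsWithin] with t ht
                exact mul_nonneg ht.1 (Real.rpow_nonneg hx0.le _)
              · filter_upwards [self_mem_nhdsWithin] with t ht
                exact mul_le_of_le_one_right ht.1
                  (Real.rpow_le_one hx0.le hx1.le (inv_nonneg.2 ht.1))
              · exact tendsto_id.mono_left nhdsWithin_le_nhds
            simpa [ContinuousWithinAt] using hsq
          · exact (continuousAt_id.mul ((Real.continuousAt_const_rpow hx0.ne').comp
              (continuousAt_inv₀ h0.ne'))).continuousWithinAt
        case hd =>
          intro w hw
          have hw0 : (0:ℝ) < w := hw.1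
          have hE : HasDerivAt (fun t : ℝ => t * Real.exp (Real.log x * t⁻¹))
              (1 * Real.exp (Real.log x * w⁻¹)
                + w * (Real.exp (Real.log x * w⁻¹) * (Real.log x * (-(w^2)⁻¹)))) w :=
            (hasDerivAt_id w).mul (((hasDerivAt_inv hw0.ne').const_mul (Real.log x)).exp)
          have heq : (fun t : ℝ => t * x ^ t⁻¹)
              =ᶠ[𝓝 w] (fun t : ℝ => t * Real.exp (Real.log x * t⁻¹)) := by
            filter_upwards [IsOpen.mem_nhds isOpen_Ioi (show w ∈ Ioi (0:ℝ) from hw0)] with t ht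
            rw [Real.rpow_def_of_pos hx0]
          have h2 := hE.congr_of_eventuallyEq heq
          refine h2.congr_deriv (Eq.symm ?_)
          show x ^ w⁻¹ * (1 - Real.log x / w) = _
          rw [Real.rpow_def_of_pos hx0]
          field_simp
          ring
      · -- pointwise slice computation
        rw [hslice, ← measure_inter_conull hnull]
        have hy0 : 0 < x ^ w⁻¹ := Real.rpow_pos_of_pos hx0 _
        have hy1 : x ^ w⁻¹ < 1 := Real.rpow_lt_one hx0.le hx1 (inv_pos.2 hw.1)
        have hset : {s : ℝ | s ^ w ≤ x} ∩ Ioo 0 1 = Ioc 0 (x ^ w⁻¹) := by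
          ext s
          simp only [mem_inter_iff, mem_setOf_eq, mem_Ioo, mem_Ioc]
          constructor
          · rintro ⟨h1, h2, _⟩
            exact ⟨h2, (Real.le_rpow_inv_iff_of_pos h2.le hx0.le hw.1).2 h1⟩
          · rintro ⟨h1, h2⟩
            exact ⟨(Real.le_rpow_inv_iff_of_pos h1.le hx0.le hw.1).1 h2, h1,
              h2.trans_lt hy1⟩
        rw [hset, hρIoc _ hy0 hy1]
        congr 1
        rw [Real.log_rpow hx0]
        field_simp
    · -- x ≥ 1
      have hIic : Iic x ∩ Ioo (0:ℝ) 1 = Ioo 0 1 := by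
        apply inter_eq_self_of_subset_right
        intro s hs
        exact hs.2.le.trans hx1
      rw [hIic, Real.volume_Ioo]
      rw [setLIntegral_congr_fun measurableSet_Ioo (fun w hw =>
        show _ = (1:ℝ≥0∞) from ?_), setLIntegral_one]
      · norm_num [Real.volume_Ioo]
      · rw [hslice, ← measure_inter_conull hnull]
        have hset : {s : ℝ | s ^ w ≤ x} ∩ Ioo 0 1 = Ioo 0 1 := by
          apply inter_eq_self_of_subset_right
          intro s hs
          exact ((Real.rpow_lt_one hs.1.le hs.2 hw.1).trans_le hx1).le
        rw [hset, hρfull]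
end

section
/- Suppose X and Y are independent, nonnegative, bounded random variables such that Y^X has the same distribution as X. Let a = inf(supp(X)) and b = sup(supp(X)), and assume 0 < a and b < ∞. Then inf(supp(Y)) = max(a^{1/a}, a^{1/b}) and sup(supp(Y)) = min(b^{1/a}, b^{1/b}). -/
open MeasureTheory ProbabilityTheory Set

lemma mSupport_closed (μ : Measure ℝ) : IsClosed (mSupport μ) := by
  rw [← isOpen_compl_iff]
  rw [isOpen_iff_forall_mem_open]
  intro x hx
  simp only [mem_compl_iff, mSupport, mem_setOf_eq, not_forall] at hx
  obtain ⟨U, hU, hxU, hμU⟩ := hx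
  exact ⟨U, fun u hu => by
    simp only [mem_compl_iff, mSupport, mem_setOf_eq, not_forall]
    exact ⟨U, hU, hu, hμU⟩, hU, hxU⟩

lemma mSupport_compl_null (μ : Measure ℝ) : μ (mSupport μ)ᶜ = 0 := by
  set B := TopologicalSpace.countableBasis ℝ
  have hB : TopologicalSpace.IsTopologicalBasis B :=
    TopologicalSpace.isBasis_countableBasis ℝ
  have hsub : (mSupport μ)ᶜ ⊆ ⋃₀ {b ∈ B | μ b = 0} := by
    intro x hx
    simp only [mem_compl_iff, mSupport, mem_setOf_eq, not_forall] at hx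
    obtain ⟨U, hU, hxU, hμU⟩ := hx
    push_neg at hμU
    obtain ⟨b, hbB, hxb, hbU⟩ := hB.exists_subset_of_mem_open hxU hU
    exact ⟨b, ⟨hbB, le_antisymm (le_trans (μ.mono hbU) hμU) bot_le⟩, hxb⟩
  refine measure_mono_null hsub ?_
  refine (measure_sUnion_null_iff ?_).2 fun s hs => hs.2
  exact (TopologicalSpace.countable_countableBasis ℝ).mono (sep_subset _ _)

lemma mSupport_subset_Ici (μ : Measure ℝ) (t : ℝ) (h : μ (Iio t) = 0) :
    mSupport μ ⊆ Ici t := by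
  intro x hx
  by_contra hxt
  have := hx (Iio t) isOpen_Iio (by simpa using hxt)
  simp [h] at this

lemma mSupport_subset_Iic (μ : Measure ℝ) (t : ℝ) (h : μ (Ioi t) = 0) :
    mSupport μ ⊆ Iic t := by
  intro x hx
  by_contra hxt
  have := hx (Ioi t) isOpen_Ioi (by simpa using not_le.1 hxt)
  simp [h] at this

lemma mSupport_nonempty (μ : Measure ℝ) [IsProbabilityMeasure μ] :
    (mSupport μ).Nonempty := by
  by_contra h
  rw [not_nonempty_iff_eq_empty] at h
  have := mSupport_compl_null μ
  rw [h, compl_empty, measure_univ] at this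
  simp at this

lemma ae_mem_mSupport {Ω : Type*} [MeasurableSpace Ω] (P : Measure Ω) [IsProbabilityMeasure P]
    (Z : Ω → ℝ) (hZ : Measurable Z) : ∀ᵐ ω ∂P, Z ω ∈ mSupport (Measure.map Z P) := by
  have h : P (Z ⁻¹' (mSupport (Measure.map Z P))ᶜ) = 0 := by
    rw [← Measure.map_apply hZ (mSupport_closed _).measurableSet.compl]
    exact mSupport_compl_null _
  filter_upwards [measure_eq_zero_iff_ae_notMem.1 h] with ω hω
  simpa using hω

lemma measurable_rpow2 : Measurable fun p : ℝ × ℝ => p.1 ^ p.2 := by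
  have heq : (fun p : ℝ × ℝ => p.1 ^ p.2) = fun p : ℝ × ℝ =>
      if p.1 = 0 then (if p.2 = 0 then 1 else 0)
      else if 0 < p.1 then Real.exp (Real.log p.1 * p.2)
      else Real.exp (Real.log p.1 * p.2) * Real.cos (p.2 * Real.pi) := by
    ext p
    split_ifs with h1 h2 h3
    · rw [h1, h2, Real.rpow_zero]
    · rw [h1, Real.zero_rpow h2]
    · exact Real.rpow_def_of_pos h3 _
    · exact Real.rpow_def_of_neg (lt_of_le_of_ne (not_lt.1 h3) h1) _
  rw [heq]
  refine Measurable.ite (measurable_fst (measurableSet_singleton 0)) ?_ ?_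
  · exact Measurable.ite (measurable_snd (measurableSet_singleton 0))
      measurable_const measurable_const
  · refine Measurable.ite ?_ ?_ ?_
    · exact measurableSet_lt measurable_const measurable_fst
    · exact (((measurable_fst.log).mul measurable_snd).exp)
    · exact (((measurable_fst.log).mul measurable_snd).exp).mul
        ((measurable_snd.mul_const _).cos)

theorem stmt_18 {Ω : Type*} [MeasurableSpace Ω] (P : Measure Ω) [IsProbabilityMeasure P]
    (X Y : Ω → ℝ) (hX : Measurable X) (hY : Measurable Y)
    (hXnonneg : ∀ᵐ ω ∂P, 0 ≤ X ω) (hYnonneg : ∀ᵐ ω ∂P, 0 ≤ Y ω)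
    (hXbdd : ∃ C : ℝ, ∀ᵐ ω ∂P, X ω ≤ C) (hYbdd : ∃ C : ℝ, ∀ᵐ ω ∂P, Y ω ≤ C)
    (hindep : IndepFun X Y P)
    (hfix : Measure.map (fun ω => Y ω ^ X ω) P = Measure.map X P)
    (ha : 0 < sInf (mSupport (Measure.map X P)))
    (hb : BddAbove (mSupport (Measure.map X P))) :
    sInf (mSupport (Measure.map Y P)) =
      max ((sInf (mSupport (Measure.map X P))) ^ (1 / sInf (mSupport (Measure.map X P))))
        ((sInf (mSupport (Measure.map X P))) ^ (1 / sSup (mSupport (Measure.map X P)))) ∧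
    sSup (mSupport (Measure.map Y P)) =
      min ((sSup (mSupport (Measure.map X P))) ^ (1 / sInf (mSupport (Measure.map X P))))
        ((sSup (mSupport (Measure.map X P))) ^ (1 / sSup (mSupport (Measure.map X P)))) := by
  have hZ : Measurable fun ω => Y ω ^ X ω :=
    measurable_rpow2.comp (hY.prodMk hX)
  set μX := Measure.map X P with hμX
  set μY := Measure.map Y P with hμY
  haveI : IsProbabilityMeasure μX := Measure.isProbabilityMeasure_map hX.aemeasurable
  haveI : IsProbabilityMeasure μY := Measure.isProbabilityMeasure_map hY.aemeasurable
  set SX := mSupport μX with hSX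
  set SY := mSupport μY with hSYdef
  set a := sInf SX with hadef
  set b := sSup SX with hbdef
  set c := sInf SY with hcdef
  set d := sSup SY with hddef
  obtain ⟨CX, hCX⟩ := hXbdd
  obtain ⟨CY, hCY⟩ := hYbdd
  -- negative values are null
  have hXlt0 : μX (Iio 0) = 0 := by
    rw [hμX, Measure.map_apply hX measurableSet_Iio]
    have := ae_iff.mp hXnonneg
    simpa [Set.preimage, not_le] using this
  have hYlt0 : μY (Iio 0) = 0 := by
    rw [hμY, Measure.map_apply hY measurableSet_Iio]
    have := ae_iff.mp hYnonneg
    simpa [Set.preimage, not_le] using this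
  have hXgtC : μX (Ioi CX) = 0 := by
    rw [hμX, Measure.map_apply hX measurableSet_Ioi]
    have := ae_iff.mp hCX
    simpa [Set.preimage, not_le] using this
  have hYgtC : μY (Ioi CY) = 0 := by
    rw [hμY, Measure.map_apply hY measurableSet_Ioi]
    have := ae_iff.mp hCY
    simpa [Set.preimage, not_le] using this
  -- support facts for X
  have hSXbb : BddBelow SX := ⟨0, fun x hx => mSupport_subset_Ici μX 0 hXlt0 hx⟩
  have hSXne : SX.Nonempty := mSupport_nonempty μX
  have haS : a ∈ SX := (mSupport_closed μX).csInf_mem hSXne hSXbb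
  have hbS : b ∈ SX := (mSupport_closed μX).csSup_mem hSXne hb
  have hab : a ≤ b := csInf_le_csSup hSXne hSXbb hb
  have hb0 : 0 < b := lt_of_lt_of_le ha hab
  -- support facts for Y
  have hSYbb : BddBelow SY := ⟨0, fun y hy => mSupport_subset_Ici μY 0 hYlt0 hy⟩
  have hSYba : BddAbove SY := ⟨CY, fun y hy => mSupport_subset_Iic μY CY hYgtC hy⟩
  have hSYne : SY.Nonempty := mSupport_nonempty μY
  have hcS : c ∈ SY := (mSupport_closed μY).csInf_mem hSYne hSYbb
  have hdS : d ∈ SY := (mSupport_closed μY).csSup_mem hSYne hSYba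
  have hcd : c ≤ d := csInf_le_csSup hSYne hSYbb hSYba
  have hc0 : 0 ≤ c := le_csInf hSYne fun y hy => mSupport_subset_Ici μY 0 hYlt0 hy
  -- null sets beyond the support interval
  have hμXIio : μX (Iio a) = 0 := by
    refine measure_mono_null ?_ (mSupport_compl_null μX)
    intro x hx
    simp only [mem_compl_iff]
    exact fun hxS => absurd (csInf_le hSXbb hxS) (not_le.2 hx)
  have hμXIoi : μX (Ioi b) = 0 := by
    refine measure_mono_null ?_ (mSupport_compl_null μX)
    intro x hx
    simp only [mem_compl_iff]
    exact fun hxS => absurd (le_csSup hb hxS) (not_le.2 hx)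
  have hμYIio : μY (Iio c) = 0 := by
    refine measure_mono_null ?_ (mSupport_compl_null μY)
    intro y hy
    simp only [mem_compl_iff]
    exact fun hyS => absurd (csInf_le hSYbb hyS) (not_le.2 hy)
  have hμYIoi : μY (Ioi d) = 0 := by
    refine measure_mono_null ?_ (mSupport_compl_null μY)
    intro y hy
    simp only [mem_compl_iff]
    exact fun hyS => absurd (le_csSup hSYba hyS) (not_le.2 hy)
  -- translate to probabilities
  have hXgea : P {ω | X ω < a} = 0 := by
    have := hμXIio
    rwa [hμX, Measure.map_apply hX measurableSet_Iio] at this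
  have hXleb : P {ω | b < X ω} = 0 := by
    have := hμXIoi
    rwa [hμX, Measure.map_apply hX measurableSet_Ioi] at this
  have hYgec : P {ω | Y ω < c} = 0 := by
    have := hμYIio
    rwa [hμY, Measure.map_apply hY measurableSet_Iio] at this
  have hYled : P {ω | d < Y ω} = 0 := by
    have := hμYIoi
    rwa [hμY, Measure.map_apply hY measurableSet_Ioi] at this
  have hYneg : P {ω | Y ω < 0} = 0 := by
    have := ae_iff.mp hYnonneg
    simpa [not_le] using this
  -- the power variable is a.s. in [a, b]
  have hZIio : P {ω | Y ω ^ X ω < a} = 0 := by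
    have h0 : Measure.map (fun ω => Y ω ^ X ω) P (Iio a) = 0 := by
      rw [hfix]; exact hμXIio
    rwa [Measure.map_apply hZ measurableSet_Iio] at h0
  have hZIoi : P {ω | b < Y ω ^ X ω} = 0 := by
    have h0 : Measure.map (fun ω => Y ω ^ X ω) P (Ioi b) = 0 := by
      rw [hfix]; exact hμXIoi
    rwa [Measure.map_apply hZ measurableSet_Ioi] at h0
  -- the key independence / continuity argument
  have key : ∀ y ∈ SY, ∀ x ∈ SX, 0 < y → ∀ W : Set ℝ, IsOpen W → μX W = 0 →
      y ^ x ∈ W → False := by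
    intro y hy x hx hy0 W hW hWnull hyxW
    have hcont : ContinuousAt (fun p : ℝ × ℝ => p.1 ^ p.2) (y, x) :=
      Real.continuousAt_rpow (y, x) (Or.inl hy0.ne')
    have hmem : (fun p : ℝ × ℝ => p.1 ^ p.2) ⁻¹' W ∈ nhds (y, x) :=
      hcont.preimage_mem_nhds (hW.mem_nhds hyxW)
    rw [mem_nhds_prod_iff] at hmem
    obtain ⟨u, hu, v, hv, huv⟩ := hmem
    obtain ⟨U, hUu, hUopen, hyU⟩ := mem_nhds_iff.mp hu
    obtain ⟨V, hVv, hVopen, hxV⟩ := mem_nhds_iff.mp hv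
    have hPY : 0 < P (Y ⁻¹' U) := by
      have := hy U hUopen hyU
      rwa [hμY, Measure.map_apply hY hUopen.measurableSet] at this
    have hPX : 0 < P (X ⁻¹' V) := by
      have := hx V hVopen hxV
      rwa [hμX, Measure.map_apply hX hVopen.measurableSet] at this
    have hprod : 0 < P (X ⁻¹' V ∩ Y ⁻¹' U) := by
      rw [hindep.measure_inter_preimage_eq_mul V U hVopen.measurableSet hUopen.measurableSet]
      exact ENNReal.mul_pos hPX.ne' hPY.ne'
    have hsub : X ⁻¹' V ∩ Y ⁻¹' U ⊆ (fun ω => Y ω ^ X ω) ⁻¹' W := by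
      rintro ω ⟨hωV, hωU⟩
      exact huv (Set.mk_mem_prod (hUu hωU) (hVv hωV))
    have hW0 : P ((fun ω => Y ω ^ X ω) ⁻¹' W) = 0 := by
      rw [← Measure.map_apply hZ hW.measurableSet, hfix]
      exact hWnull
    exact absurd (measure_mono_null hsub hW0) hprod.ne'
  -- c is positive
  have hc : 0 < c := by
    rcases lt_or_eq_of_le hc0 with h | h
    · exact h
    exfalso
    have h0S : (0 : ℝ) ∈ SY := h ▸ hcS
    set ε := min 1 (a ^ (1 / a)) / 2 with hε
    have hapow : 0 < a ^ (1 / a) := Real.rpow_pos_of_pos ha _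
    have hε0 : 0 < ε := by positivity
    have hε1 : ε < 1 := by
      have h1 : min 1 (a ^ (1 / a)) ≤ 1 := min_le_left _ _
      rw [hε]; linarith
    have hεa : ε < a ^ (1 / a) := by
      have h1 : min 1 (a ^ (1 / a)) ≤ a ^ (1 / a) := min_le_right _ _
      rw [hε]; linarith
    have hPU : 0 < P (Y ⁻¹' Ioo (-ε) ε) := by
      have := h0S (Ioo (-ε) ε) isOpen_Ioo ⟨by linarith, hε0⟩
      rwa [hμY, Measure.map_apply hY measurableSet_Ioo] at this
    have hsub : Y ⁻¹' Ioo (-ε) ε ⊆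
        {ω | Y ω ^ X ω < a} ∪ ({ω | Y ω < 0} ∪ {ω | X ω < a}) := by
      intro ω hω
      by_cases h1 : 0 ≤ Y ω
      · by_cases h2 : a ≤ X ω
        · left
          show Y ω ^ X ω < a
          rcases eq_or_lt_of_le h1 with hY0 | hY0
          · rw [← hY0, Real.zero_rpow (ne_of_gt (lt_of_lt_of_le ha h2))]
            exact ha
          · have hYle1 : Y ω ≤ 1 := le_of_lt (lt_trans hω.2 hε1)
            calc Y ω ^ X ω ≤ Y ω ^ a :=
                  Real.rpow_le_rpow_of_exponent_ge hY0 hYle1 h2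
              _ < (a ^ (1 / a)) ^ a := Real.rpow_lt_rpow h1 (lt_trans hω.2 hεa) ha
              _ = a := by
                  rw [← Real.rpow_mul (le_of_lt ha), one_div_mul_cancel (ne_of_gt ha),
                    Real.rpow_one]
        · right; right; exact not_le.1 h2
      · right; left; exact not_le.1 h1
    have hnull : P ({ω | Y ω ^ X ω < a} ∪ ({ω | Y ω < 0} ∪ {ω | X ω < a})) = 0 :=
      measure_union_null hZIio (measure_union_null hYneg hXgea)
    exact absurd (measure_mono_null hsub hnull) hPU.ne'
  have hd : 0 < d := lt_of_lt_of_le hc hcd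
  -- one-sided bounds from key
  have hca : a ≤ c ^ a := by
    by_contra h
    exact key c hcS a haS hc (Iio a) isOpen_Iio hμXIio (not_le.1 h)
  have hcb : a ≤ c ^ b := by
    by_contra h
    exact key c hcS b hbS hc (Iio a) isOpen_Iio hμXIio (not_le.1 h)
  have hda : d ^ a ≤ b := by
    by_contra h
    exact key d hdS a haS hd (Ioi b) isOpen_Ioi hμXIoi (not_le.1 h)
  have hdb : d ^ b ≤ b := by
    by_contra h
    exact key d hdS b hbS hd (Ioi b) isOpen_Ioi hμXIoi (not_le.1 h)
  -- pointwise bounds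
  have hptlow : ∀ ω, c ≤ Y ω → a ≤ X ω → X ω ≤ b → min (c ^ a) (c ^ b) ≤ Y ω ^ X ω := by
    intro ω h1 h2 h3
    have hx0 : 0 < X ω := lt_of_lt_of_le ha h2
    have step1 : c ^ X ω ≤ Y ω ^ X ω := Real.rpow_le_rpow (le_of_lt hc) h1 (le_of_lt hx0)
    refine le_trans ?_ step1
    rcases le_total 1 c with h1c | h1c
    · exact le_trans (min_le_left _ _) (Real.rpow_le_rpow_of_exponent_le h1c h2)
    · exact le_trans (min_le_right _ _) (Real.rpow_le_rpow_of_exponent_ge hc h1c h3)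
  have hpthigh : ∀ ω, 0 ≤ Y ω → Y ω ≤ d → a ≤ X ω → X ω ≤ b →
      Y ω ^ X ω ≤ max (d ^ a) (d ^ b) := by
    intro ω h0 h1 h2 h3
    have hx0 : 0 < X ω := lt_of_lt_of_le ha h2
    have step1 : Y ω ^ X ω ≤ d ^ X ω := Real.rpow_le_rpow h0 h1 (le_of_lt hx0)
    refine le_trans step1 ?_
    rcases le_total 1 d with h1d | h1d
    · exact le_trans (Real.rpow_le_rpow_of_exponent_le h1d h3) (le_max_right _ _)
    · exact le_trans (Real.rpow_le_rpow_of_exponent_ge hd h1d h2) (le_max_left _ _)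
  -- attainment of a
  have hmin : min (c ^ a) (c ^ b) = a := by
    refine le_antisymm ?_ (le_min hca hcb)
    by_contra h
    push_neg at h
    have hpos : 0 < P ((fun ω => Y ω ^ X ω) ⁻¹' Iio (min (c ^ a) (c ^ b))) := by
      rw [← Measure.map_apply hZ measurableSet_Iio, hfix]
      exact haS (Iio (min (c ^ a) (c ^ b))) isOpen_Iio h
    have hsub : (fun ω => Y ω ^ X ω) ⁻¹' Iio (min (c ^ a) (c ^ b)) ⊆
        {ω | Y ω < c} ∪ ({ω | X ω < a} ∪ {ω | b < X ω}) := by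
      intro ω hω
      by_cases h1 : c ≤ Y ω
      · by_cases h2 : a ≤ X ω
        · by_cases h3 : X ω ≤ b
          · exact absurd (hptlow ω h1 h2 h3) (not_le.2 hω)
          · exact Or.inr (Or.inr (not_le.1 h3))
        · exact Or.inr (Or.inl (not_le.1 h2))
      · exact Or.inl (not_le.1 h1)
    have hnull : P ({ω | Y ω < c} ∪ ({ω | X ω < a} ∪ {ω | b < X ω})) = 0 :=
      measure_union_null hYgec (measure_union_null hXgea hXleb)
    exact absurd (measure_mono_null hsub hnull) hpos.ne'
  -- attainment of b
  have hmax : max (d ^ a) (d ^ b) = b := by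
    refine le_antisymm (max_le hda hdb) ?_
    by_contra h
    push_neg at h
    have hpos : 0 < P ((fun ω => Y ω ^ X ω) ⁻¹' Ioi (max (d ^ a) (d ^ b))) := by
      rw [← Measure.map_apply hZ measurableSet_Ioi, hfix]
      exact hbS (Ioi (max (d ^ a) (d ^ b))) isOpen_Ioi h
    have hsub : (fun ω => Y ω ^ X ω) ⁻¹' Ioi (max (d ^ a) (d ^ b)) ⊆
        {ω | Y ω < 0} ∪ ({ω | d < Y ω} ∪ ({ω | X ω < a} ∪ {ω | b < X ω})) := by
      intro ω hω
      by_cases h0 : 0 ≤ Y ω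
      · by_cases h1 : Y ω ≤ d
        · by_cases h2 : a ≤ X ω
          · by_cases h3 : X ω ≤ b
            · exact absurd (hpthigh ω h0 h1 h2 h3) (not_le.2 hω)
            · exact Or.inr (Or.inr (Or.inr (not_le.1 h3)))
          · exact Or.inr (Or.inr (Or.inl (not_le.1 h2)))
        · exact Or.inr (Or.inl (not_le.1 h1))
      · exact Or.inl (not_le.1 h0)
    have hnull : P ({ω | Y ω < 0} ∪ ({ω | d < Y ω} ∪ ({ω | X ω < a} ∪ {ω | b < X ω}))) = 0 :=
      measure_union_null hYneg
        (measure_union_null hYled (measure_union_null hXgea hXleb))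
    exact absurd (measure_mono_null hsub hnull) hpos.ne'
  -- final algebra
  constructor
  · rcases le_total 1 c with h1c | h1c
    · have hmineq : min (c ^ a) (c ^ b) = c ^ a :=
        min_eq_left (Real.rpow_le_rpow_of_exponent_le h1c hab)
      have hca' : c ^ a = a := hmineq.symm.trans hmin
      have h1a : 1 ≤ a := by
        calc (1 : ℝ) = 1 ^ a := (Real.one_rpow a).symm
          _ ≤ c ^ a := Real.rpow_le_rpow zero_le_one h1c (le_of_lt ha)
          _ = a := hca'
      have hc_eq : c = a ^ (1 / a) := by
        have h2 : (c ^ a) ^ (1 / a) = c := by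
          rw [← Real.rpow_mul (le_of_lt hc), mul_one_div_cancel (ne_of_gt ha), Real.rpow_one]
        rw [← h2, hca']
      rw [hc_eq]
      exact (max_eq_left
        (Real.rpow_le_rpow_of_exponent_le h1a (one_div_le_one_div_of_le ha hab))).symm
    · have hmineq : min (c ^ a) (c ^ b) = c ^ b :=
        min_eq_right (Real.rpow_le_rpow_of_exponent_ge hc h1c hab)
      have hcb' : c ^ b = a := hmineq.symm.trans hmin
      have h1a : a ≤ 1 := by
        calc a = c ^ b := hcb'.symm
          _ ≤ 1 ^ b := Real.rpow_le_rpow (le_of_lt hc) h1c (le_of_lt hb0)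
          _ = 1 := Real.one_rpow b
      have hc_eq : c = a ^ (1 / b) := by
        have h2 : (c ^ b) ^ (1 / b) = c := by
          rw [← Real.rpow_mul (le_of_lt hc), mul_one_div_cancel (ne_of_gt hb0), Real.rpow_one]
        rw [← h2, hcb']
      rw [hc_eq]
      exact (max_eq_right
        (Real.rpow_le_rpow_of_exponent_ge ha h1a (one_div_le_one_div_of_le ha hab))).symm
  · rcases le_total 1 d with h1d | h1d
    · have hmaxeq : max (d ^ a) (d ^ b) = d ^ b :=
        max_eq_right (Real.rpow_le_rpow_of_exponent_le h1d hab)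
      have hdb' : d ^ b = b := hmaxeq.symm.trans hmax
      have h1b : 1 ≤ b := by
        calc (1 : ℝ) = 1 ^ b := (Real.one_rpow b).symm
          _ ≤ d ^ b := Real.rpow_le_rpow zero_le_one h1d (le_of_lt hb0)
          _ = b := hdb'
      have hd_eq : d = b ^ (1 / b) := by
        have h2 : (d ^ b) ^ (1 / b) = d := by
          rw [← Real.rpow_mul (le_of_lt hd), mul_one_div_cancel (ne_of_gt hb0), Real.rpow_one]
        rw [← h2, hdb']
      rw [hd_eq]
      exact (min_eq_right
        (Real.rpow_le_rpow_of_exponent_le h1b (one_div_le_one_div_of_le ha hab))).symm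
    · have hmaxeq : max (d ^ a) (d ^ b) = d ^ a :=
        max_eq_left (Real.rpow_le_rpow_of_exponent_ge hd h1d hab)
      have hda' : d ^ a = b := hmaxeq.symm.trans hmax
      have h1b : b ≤ 1 := by
        calc b = d ^ a := hda'.symm
          _ ≤ 1 ^ a := Real.rpow_le_rpow (le_of_lt hd) h1d (le_of_lt ha)
          _ = 1 := Real.one_rpow a
      have hd_eq : d = b ^ (1 / a) := by
        have h2 : (d ^ a) ^ (1 / a) = d := by
          rw [← Real.rpow_mul (le_of_lt hd), mul_one_div_cancel (ne_of_gt ha), Real.rpow_one]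
        rw [← h2, hda']
      rw [hd_eq]
      exact (min_eq_left
        (Real.rpow_le_rpow_of_exponent_ge hb0 h1b (one_div_le_one_div_of_le ha hab))).symm
end
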